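/- arXiv:1007.0199 — 2 statements merged into one kernel-verified Lean document; each statement's English description precedes it below -/
import Mathlib

section
/- Let α : ℝ≥0 × ℝ≥0 → ℝ≥0 be continuous, nonincreasing in its first argument, and satisfy the semigroup property α(ζ₁, α(ζ₂,p)) = α(ζ₁+ζ₂, p) for all ζ₁,ζ₂,p ≥ 0. Define W(x,p) = ∫₀ˣ α(s,p) ds. Then for all x,p ≥ 0 and all 0 ≤ ζ ≤ x: W(x−ζ, α(ζ,p)) + ζ·α(ζ,p) ≤ W(x,p). Consequently sup_{0 ≤ ζ ≤ x} [W(x−ζ, α(ζ,p)) + ζ·α(ζ,p)] = W(x,p). -/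
open MeasureTheory Set

/-- With zero transaction cost, `W(x,p) = ∫₀ˣ α(s,p) ds` is a fixed point of the
intervention operator. -/
theorem intervention_fixed_point (α : ℝ → ℝ → ℝ)
    (hcont : Continuous (fun q : ℝ × ℝ => α q.1 q.2))
    (hnonneg : ∀ ζ p, 0 ≤ ζ → 0 ≤ p → 0 ≤ α ζ p)
    (hmono : ∀ p, 0 ≤ p → ∀ ζ₁ ζ₂, 0 ≤ ζ₁ → ζ₁ ≤ ζ₂ → α ζ₂ p ≤ α ζ₁ p)
    (hsemi : ∀ ζ₁ ζ₂ p, 0 ≤ ζ₁ → 0 ≤ ζ₂ → 0 ≤ p → α ζ₁ (α ζ₂ p) = α (ζ₁ + ζ₂) p)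
    (W : ℝ → ℝ → ℝ) (hW : ∀ x p, W x p = ∫ s in (0:ℝ)..x, α s p)
    (x p : ℝ) (hx : 0 ≤ x) (hp : 0 ≤ p) :
    (∀ ζ, 0 ≤ ζ → ζ ≤ x → W (x - ζ) (α ζ p) + ζ * α ζ p ≤ W x p) ∧
    sSup {v : ℝ | ∃ ζ, 0 ≤ ζ ∧ ζ ≤ x ∧ v = W (x - ζ) (α ζ p) + ζ * α ζ p} = W x p := by
  have hc : ∀ p', Continuous (fun s => α s p') := fun p' =>
    hcont.comp (continuous_id.prodMk continuous_const)
  have key : ∀ ζ, 0 ≤ ζ → ζ ≤ x → W (x - ζ) (α ζ p) + ζ * α ζ p ≤ W x p := by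
    intro ζ hζ0 hζx
    have hq : 0 ≤ α ζ p := hnonneg ζ p hζ0 hp
    have h1 : W (x - ζ) (α ζ p) = ∫ s in ζ..x, α s p := by
      rw [hW]
      have e1 : (∫ s in (0:ℝ)..(x - ζ), α s (α ζ p))
          = ∫ s in (0:ℝ)..(x - ζ), α (s + ζ) p := by
        apply intervalIntegral.integral_congr
        intro s hs
        rw [uIcc_of_le (by linarith)] at hs
        exact hsemi s ζ p hs.1 hζ0 hp
      rw [e1, intervalIntegral.integral_comp_add_right (fun s => α s p) ζ]
      norm_num
    have h2 : ζ * α ζ p ≤ ∫ s in (0:ℝ)..ζ, α s p := by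
      have := intervalIntegral.integral_mono_on hζ0
        (intervalIntegrable_const : IntervalIntegrable (fun _ => α ζ p) MeasureTheory.volume 0 ζ)
        ((hc p).intervalIntegrable 0 ζ)
        (fun s hs => hmono p hp s ζ hs.1 hs.2)
      simpa using this
    have h3 : W x p = (∫ s in (0:ℝ)..ζ, α s p) + ∫ s in ζ..x, α s p := by
      rw [hW, ← intervalIntegral.integral_add_adjacent_intervals
        ((hc p).intervalIntegrable 0 ζ) ((hc p).intervalIntegrable ζ x)]
    rw [h1, h3]
    linarith
  refine ⟨key, ?_⟩
  have hmem : W x p ∈ {v : ℝ | ∃ ζ, 0 ≤ ζ ∧ ζ ≤ x ∧ v = W (x - ζ) (α ζ p) + ζ * α ζ p} := by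
    refine ⟨0, le_refl 0, hx, ?_⟩
    have : W (x - 0) (α 0 p) = W x p := by
      rw [hW, hW, sub_zero]
      apply intervalIntegral.integral_congr
      intro s hs
      rw [uIcc_of_le (by linarith)] at hs
      have := hsemi s 0 p hs.1 le_rfl hp
      simpa using this
    rw [this]; ring
  refine le_antisymm (csSup_le ⟨_, hmem⟩ ?_) (le_csSup ⟨W x p, ?_⟩ hmem)
  · rintro v ⟨ζ, h0, h1, rfl⟩; exact key ζ h0 h1
  · rintro v ⟨ζ, h0, h1, rfl⟩; exact key ζ h0 h1
end

section
/- Suppose α : ℝ × ℝ → ℝ is differentiable and satisfies α(ζ₁, α(ζ₂,p)) = α(ζ₁+ζ₂, p) for all ζ₁, ζ₂, p. Define γ(p) = −∂α/∂ζ(0,p). Then for all ζ and p: ∂α/∂ζ(ζ,p) = −γ(p)·∂α/∂p(ζ,p). -/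
open Topology Filter

/-- If a differentiable idempotent map `h : ℝ → ℝ` has a fixed point `y`
with another fixed point `x < y`, then no point `s > y` can fail to be fixed. -/
lemma idem_no_unfixed_above (h : ℝ → ℝ) (hd : Differentiable ℝ h)
    (hidem : ∀ s, h (h s) = h s)
    {x y s : ℝ} (hx : h x = x) (hy : h y = y) (hxy : x < y) (hys : y < s)
    (hns : h s ≠ s) : False := by
  have hcont : Continuous h := hd.continuous
  -- any point between two fixed points is fixed
  have hicc : ∀ a b : ℝ, h a = a → h b = b → ∀ u, a ≤ u → u ≤ b → h u = u := by
    intro a b ha hb u hau hub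
    have hab : a ≤ b := le_trans hau hub
    have : u ∈ Set.Icc (h a) (h b) := by rw [ha, hb]; exact ⟨hau, hub⟩
    obtain ⟨c, _, hc⟩ := intermediate_value_Icc hab hcont.continuousOn this
    rw [← hc, hidem]
  set S : Set ℝ := {z | h z = z} ∩ Set.Iic s with hS
  have hSclosed : IsClosed S :=
    (isClosed_eq hcont continuous_id).inter isClosed_Iic
  have hSne : S.Nonempty := ⟨y, hy, le_of_lt hys⟩
  have hSbdd : BddAbove S := ⟨s, fun z hz => hz.2⟩
  set b := sSup S with hb
  have hbS : b ∈ S := hSclosed.csSup_mem hSne hSbdd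
  have hfb : h b = b := hbS.1
  have hyb : y ≤ b := le_csSup hSbdd ⟨hy, le_of_lt hys⟩
  have hbs : b < s := lt_of_le_of_ne hbS.2 (fun hbe => hns (hbe ▸ hfb))
  have hxb : x < b := lt_of_lt_of_le hxy hyb
  -- all points of (b, s] have image ≤ b
  have hright : ∀ z, b < z → z ≤ s → h z ≤ b := by
    intro z hbz hzs
    have hfz : h (h z) = h z := hidem z
    have hzle : h z ≤ s := by
      by_contra hgt
      push_neg at hgt
      exact hns (hicc x (h z) hx hfz s (le_of_lt (lt_trans hxy hys)) (le_of_lt hgt))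
    exact le_csSup hSbdd ⟨hfz, hzle⟩
  -- derivative of h at b
  have hder : HasDerivAt h (deriv h b) b := (hd b).hasDerivAt
  have hslope := hasDerivAt_iff_tendsto_slope.mp hder
  -- left limit gives deriv h b = 1
  have hleft : deriv h b = 1 := by
    have hmono : 𝓝[<] b ≤ 𝓝[≠] b :=
      nhdsWithin_mono b (fun z hz => ne_of_lt hz)
    have htend : Filter.Tendsto (slope h b) (𝓝[<] b) (𝓝 (deriv h b)) :=
      hslope.mono_left hmono
    have hev : ∀ᶠ z in 𝓝[<] b, slope h b z = 1 := by
      filter_upwards [Ioo_mem_nhdsLT_of_mem (⟨hxb, le_refl b⟩ : b ∈ Set.Ioc x b)]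
        with z hz
      have hfzz : h z = z := hicc x b hx hfb z (le_of_lt hz.1) (le_of_lt hz.2)
      rw [slope_def_field, hfzz, hfb, div_self (sub_ne_zero.mpr (ne_of_lt hz.2))]
    have : Filter.Tendsto (slope h b) (𝓝[<] b) (𝓝 1) :=
      Filter.Tendsto.congr' (hev.mono fun z hz => hz.symm) tendsto_const_nhds
    exact tendsto_nhds_unique htend this
  -- right limit gives deriv h b ≤ 0
  have hrightle : deriv h b ≤ 0 := by
    have hmono : 𝓝[>] b ≤ 𝓝[≠] b :=
      nhdsWithin_mono b (fun z hz => ne_of_gt hz)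
    have htend : Filter.Tendsto (slope h b) (𝓝[>] b) (𝓝 (deriv h b)) :=
      hslope.mono_left hmono
    have hev : ∀ᶠ z in 𝓝[>] b, slope h b z ≤ 0 := by
      filter_upwards [Ioo_mem_nhdsGT_of_mem (⟨le_refl b, hbs⟩ : b ∈ Set.Ico b s)]
        with z hz
      have h1 : h z ≤ b := hright z hz.1 (le_of_lt hz.2)
      rw [slope_def_field, hfb]
      apply div_nonpos_of_nonpos_of_nonneg <;> [linarith [hz.1]; linarith [hz.1]]
    exact le_of_tendsto htend hev
  linarith

/-- A differentiable idempotent map with two distinct fixed points is the identity. -/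
lemma idem_two_fixed (h : ℝ → ℝ) (hd : Differentiable ℝ h)
    (hidem : ∀ s, h (h s) = h s)
    {x y : ℝ} (hx : h x = x) (hy : h y = y) (hxy : x < y) : ∀ s, h s = s := by
  intro s
  by_contra hns
  have hcont : Continuous h := hd.continuous
  have hicc : ∀ a b : ℝ, h a = a → h b = b → ∀ u, a ≤ u → u ≤ b → h u = u := by
    intro a b ha hb u hau hub
    have hab : a ≤ b := le_trans hau hub
    have : u ∈ Set.Icc (h a) (h b) := by rw [ha, hb]; exact ⟨hau, hub⟩
    obtain ⟨c, _, hc⟩ := intermediate_value_Icc hab hcont.continuousOn this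
    rw [← hc, hidem]
  rcases lt_trichotomy s x with hlt | heq | hgt
  · -- mirror case: use g z = -h (-z)
    have := idem_no_unfixed_above (fun z => -h (-z))
      (by fun_prop)
      (fun z => by simp [hidem])
      (x := -y) (y := -x) (s := -s)
      (by simp [hy]) (by simp [hx]) (by linarith) (by linarith)
      (by simp; intro hc; exact hns (by linarith))
    exact this
  · exact hns (heq ▸ hx)
  · rcases lt_trichotomy s y with hlty | heqy | hgty
    · exact hns (hicc x y hx hy s (le_of_lt hgt) (le_of_lt hlty))
    · exact hns (heqy ▸ hy)
    · exact idem_no_unfixed_above h hd hidem hx hy hxy hgty hns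

/-- The semigroup (flow) property forces `∂α/∂ζ(ζ,p) = -γ(p)·∂α/∂p(ζ,p)`
where `γ(p) = -∂α/∂ζ(0,p)`. -/
theorem impact_derivative_relation (α : ℝ → ℝ → ℝ)
    (hdiff : Differentiable ℝ (fun q : ℝ × ℝ => α q.1 q.2))
    (hsemi : ∀ ζ₁ ζ₂ p, α ζ₁ (α ζ₂ p) = α (ζ₁ + ζ₂) p)
    (γ : ℝ → ℝ) (hγ : ∀ p, γ p = - deriv (fun ζ => α ζ p) 0)
    (ζ p : ℝ) :
    deriv (fun z => α z p) ζ = - γ p * deriv (fun q => α ζ q) p := by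
  have hA : ∀ z w : ℝ, DifferentiableAt ℝ (fun t => α t w) z := by
    intro z w
    have : DifferentiableAt ℝ ((fun q : ℝ × ℝ => α q.1 q.2) ∘ (fun t : ℝ => (t, w))) z :=
      (hdiff (z, w)).comp z (by fun_prop)
    exact this
  have hB : ∀ z w : ℝ, DifferentiableAt ℝ (fun t => α z t) w := by
    intro z w
    have : DifferentiableAt ℝ ((fun q : ℝ × ℝ => α q.1 q.2) ∘ (fun t : ℝ => (z, t))) w :=
      (hdiff (z, w)).comp w (by fun_prop)
    exact this
  have hidem : ∀ s, α 0 (α 0 s) = α 0 s := by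
    intro s; rw [hsemi, zero_add]
  by_cases hid : ∀ s, α 0 s = s
  · -- α 0 is the identity: chain rule
    have hu : HasDerivAt (fun t => α t p) (deriv (fun t => α t p) 0) 0 :=
      (hA 0 p).hasDerivAt
    have hg : HasDerivAt (fun q => α ζ q) (deriv (fun q => α ζ q) p) (α 0 p) := by
      rw [hid p]; exact (hB ζ p).hasDerivAt
    have hcomp : HasDerivAt (fun t => α ζ (α t p))
        (deriv (fun q => α ζ q) p * deriv (fun t => α t p) 0) 0 :=
      HasDerivAt.comp 0 hg hu
    have heq : (fun t => α ζ (α t p)) = (fun t => α (ζ + t) p) := by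
      funext t; rw [hsemi]
    rw [heq] at hcomp
    -- the shifted function has derivative deriv (fun z => α z p) ζ at 0
    have hinner : HasDerivAt (fun t : ℝ => ζ + t) 1 0 := by
      simpa using (hasDerivAt_id (0:ℝ)).const_add ζ
    have houter : HasDerivAt (fun z => α z p) (deriv (fun z => α z p) ζ) (ζ + 0) := by
      rw [add_zero]; exact (hA ζ p).hasDerivAt
    have hshift : HasDerivAt (fun t => α (ζ + t) p)
        (deriv (fun z => α z p) ζ * 1) 0 :=
      HasDerivAt.comp 0 houter hinner
    have := hshift.unique hcomp
    rw [hγ p]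
    rw [mul_one] at this
    rw [this]; ring
  · -- α 0 has at most one fixed point, so α is constant
    push_neg at hid
    obtain ⟨s₀, hs₀⟩ := hid
    have huniq : ∀ x y : ℝ, α 0 x = x → α 0 y = y → x = y := by
      intro x y hx hy
      by_contra hne
      rcases lt_or_gt_of_ne hne with hlt | hgt
      · exact hs₀ (idem_two_fixed (fun s => α 0 s) (hB 0) hidem hx hy hlt s₀)
      · exact hs₀ (idem_two_fixed (fun s => α 0 s) (hB 0) hidem hy hx hgt s₀)
    have hfix : ∀ t s, α 0 (α t s) = α t s := by
      intro t s; rw [hsemi, zero_add]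
    have hconst : ∀ t s, α t s = α 0 0 :=
      fun t s => huniq _ _ (hfix t s) (hfix 0 0)
    have h1 : (fun z => α z p) = fun _ => α 0 0 := funext fun z => hconst z p
    have h2 : (fun q => α ζ q) = fun _ => α 0 0 := funext fun q => hconst ζ q
    rw [h1, h2, deriv_const, deriv_const, mul_zero]
end
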